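/- arXiv:2208.00038 — 5 statements merged into one kernel-verified Lean document; each statement's English description precedes it below -/
import Mathlib

section
/- Let Φ be a filter on I, X_i = (X_i, ρ_i) binary structures with reflexive relations ρ_i, and x, y ∈ ∏_{i∈I} X_i with A ⊆ I such that x and y agree on I∖A. Suppose there are n ∈ ω and a fixed sign pattern ε ∈ 2^{n+1} such that for each i ∈ A there exists z̄ ∈ X_i^n making (z̄, ε) a path from x_i to y_i in X_i. Then in the reduced product ∏_Φ X_i there is a path (of length n+1, with the same sign pattern ε) from [x]_Φ to [y]_Φ. -/
/-- Reflexivization of a binary relation. -/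
def rRefl {X : Type*} (ρ : X → X → Prop) : X → X → Prop := fun a b => ρ a b ∨ a = b

/-- Signed step: `ρ` for `false`, `ρ⁻¹` for `true` (after reflexivizing). -/
def rStep {X : Type*} (ρ : X → X → Prop) : Bool → X → X → Prop :=
  fun e a b => if e then rRefl ρ b a else rRefl ρ a b

/-- `(z, ε)` is a path of length `n+1` from `x` to `y`. -/
def pathPts {X : Type*} {n : ℕ} (x y : X) (z : Fin n → X) : Fin (n + 2) → X :=
  Fin.cons x (Fin.snoc z y)

def IsPath {X : Type*} (ρ : X → X → Prop) {n : ℕ} (z : Fin n → X)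
    (ε : Fin (n + 1) → Bool) (x y : X) : Prop :=
  ∀ k : Fin (n + 1), rStep ρ (ε k) (pathPts x y z k.castSucc) (pathPts x y z k.succ)

/-- There is a path of length `≤ n+1` from `x` to `y`. -/
def dLE {X : Type*} (ρ : X → X → Prop) (n : ℕ) (x y : X) : Prop :=
  ∃ m, m ≤ n ∧ ∃ z : Fin m → X, ∃ ε : Fin (m + 1) → Bool, IsPath ρ z ε x y

/-- A binary structure is connected iff any two points are joined by a finite path. -/
def Conn {X : Type*} (ρ : X → X → Prop) : Prop := ∀ x y : X, ∃ n, dLE ρ n x y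

/-- The setoid of a reduced product: agreement on a set in the filter. -/
def redSetoid {I : Type*} (Φ : Filter I) (X : I → Type*) : Setoid (∀ i, X i) where
  r x y := {i | x i = y i} ∈ Φ
  iseqv := by
    refine ⟨fun x => ?_, fun h => ?_, fun h1 h2 => ?_⟩
    · simpa using Filter.univ_mem
    · filter_upwards [h] with i e using e.symm
    · filter_upwards [h1, h2] with i e1 e2 using e1.trans e2

/-- The relation of the reduced product. -/
def redRel {I : Type*} (Φ : Filter I) {X : I → Type*} (ρ : ∀ i, X i → X i → Prop) :
    Quotient (redSetoid Φ X) → Quotient (redSetoid Φ X) → Prop :=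
  Quotient.lift₂ (fun x y => {i | ρ i (x i) (y i)} ∈ Φ)
    (by
      intro a b a' b' ha hb
      have ha' : {i | a i = a' i} ∈ Φ := ha
      have hb' : {i | b i = b' i} ∈ Φ := hb
      apply propext
      constructor
      · intro h
        filter_upwards [h, ha', hb'] with i h1 h2 h3
        rw [← h2, ← h3]; exact h1
      · intro h
        filter_upwards [h, ha', hb'] with i h1 h2 h3
        rw [h2, h3]; exact h1)

/-- The coordinatewise relation of the direct product. -/
def dirRel {I : Type*} {X : I → Type*} (ρ : ∀ i, X i → X i → Prop) :
    (∀ i, X i) → (∀ i, X i) → Prop := fun x y => ∀ i, ρ i (x i) (y i)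

/-- A non-principal ultrafilter contains no singleton. -/
def NonPrincipal {I : Type*} (U : Ultrafilter I) : Prop := ∀ a : I, {a} ∉ U

/-- An `ω`-complete (countably complete) ultrafilter. -/
def OmegaComplete {I : Type*} (U : Ultrafilter I) : Prop :=
  ∀ f : ℕ → Set I, (∀ n, f n ∈ U) → (⋂ n, f n) ∈ U

/-- `|I|` is less than the first measurable cardinal: no subset of `I` carries a
non-principal `ω`-complete ultrafilter. -/
def NoMeasurableLE (I : Type*) : Prop :=
  ∀ J : Set I, ∀ U : Ultrafilter J, ¬ (NonPrincipal U ∧ OmegaComplete U)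

/-- The linear graph on `ω`. -/
def linRel : ℕ → ℕ → Prop := fun m n => Nat.dist m n = 1

theorem stmt_1 {I : Type*} (Φ : Filter I) [Φ.NeBot] {X : I → Type*}
    (ρ : ∀ i, X i → X i → Prop) (hrefl : ∀ i, Reflexive (ρ i))
    (x y : ∀ i, X i) (A : Set I) (hxy : ∀ i ∉ A, x i = y i)
    (n : ℕ) (ε : Fin (n + 1) → Bool)
    (hA : ∀ i ∈ A, ∃ z : Fin n → X i, IsPath (ρ i) z ε (x i) (y i)) :
    ∃ Z : Fin n → Quotient (redSetoid Φ X),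
      IsPath (redRel Φ ρ) Z ε (Quotient.mk (redSetoid Φ X) x)
        (Quotient.mk (redSetoid Φ X) y) := by
  classical
  choose z hz using fun i (h : i ∈ A) => hA i h
  set w : ∀ i, Fin n → X i := fun i => if h : i ∈ A then z i h else fun _ => x i with hw
  refine ⟨fun m => Quotient.mk _ (fun i => w i m), ?_⟩
  have hpath : ∀ i, IsPath (ρ i) (w i) ε (x i) (y i) := by
    intro i
    by_cases h : i ∈ A
    · simpa [hw, h] using hz i h
    · have hxyi := hxy i h
      intro k
      simp only [hw, dif_neg h]
      have hall : ∀ j : Fin (n + 2), pathPts (x i) (y i) (fun _ => x i) j = x i := by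
        intro j
        refine Fin.cases ?_ (fun j' => ?_) j
        · simp [pathPts]
        · simp only [pathPts, Fin.cons_succ]
          refine Fin.lastCases ?_ (fun j'' => ?_) j'
          · simp [Fin.snoc_last, hxyi.symm]
          · simp [Fin.snoc_castSucc]
      cases hεk : ε k <;> simp [rStep, hall, rRefl]
  have hpts : ∀ k : Fin (n + 2),
      pathPts (Quotient.mk (redSetoid Φ X) x) (Quotient.mk (redSetoid Φ X) y)
        (fun m => Quotient.mk (redSetoid Φ X) (fun i => w i m)) k
      = Quotient.mk (redSetoid Φ X) (fun i => pathPts (x i) (y i) (w i) k) := by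
    intro k
    refine Fin.cases ?_ (fun j => ?_) k
    · simp [pathPts]
    · simp only [pathPts, Fin.cons_succ]
      refine Fin.lastCases ?_ (fun j' => ?_) j
      · simp [Fin.snoc_last]
      · simp [Fin.snoc_castSucc]
  intro k
  have hstep : ∀ i, rStep (ρ i) (ε k) (pathPts (x i) (y i) (w i) k.castSucc)
      (pathPts (x i) (y i) (w i) k.succ) := fun i => hpath i k
  show rStep (redRel Φ ρ) (ε k) _ _
  rw [hpts, hpts]
  cases hεk : ε k with
  | false =>
    simp only [rStep, if_neg Bool.false_ne_true, rRefl]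
    left
    show {i | ρ i (pathPts (x i) (y i) (w i) k.castSucc) (pathPts (x i) (y i) (w i) k.succ)} ∈ Φ
    refine Filter.univ_mem' fun i => ?_
    have := hstep i
    rw [hεk] at this
    simp only [rStep, if_neg Bool.false_ne_true, rRefl] at this
    rcases this with h | h
    · exact h
    · simp only [Set.mem_setOf_eq, h]; exact hrefl i _
  | true =>
    simp only [rStep, if_pos rfl, rRefl]
    left
    show {i | ρ i (pathPts (x i) (y i) (w i) k.succ) (pathPts (x i) (y i) (w i) k.castSucc)} ∈ Φ
    refine Filter.univ_mem' fun i => ?_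
    have := hstep i
    rw [hεk] at this
    simp only [rStep, if_pos rfl, rRefl] at this
    rcases this with h | h
    · exact h
    · simp only [Set.mem_setOf_eq, h]; exact hrefl i _
end

section
/- Let κ be an infinite cardinal that is not measurable, and let Φ be a filter on κ all of whose elements are infinite sets. Then there is a partition κ = ⋃_{n∈ω} I_n into countably many pieces such that every F ∈ Φ meets I_n for infinitely many n ∈ ω. -/
theorem stmt_2 {I : Type*} [Infinite I]
    (hnm : ¬ ∃ U : Ultrafilter I, NonPrincipal U ∧ OmegaComplete U)
    (Φ : Filter I) [Φ.NeBot] (hinf : ∀ F ∈ Φ, F.Infinite) :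
    ∃ f : I → ℕ, ∀ F ∈ Φ, {n : ℕ | (F ∩ f ⁻¹' {n}).Nonempty}.Infinite := by
  by_contra hcon
  push_neg at hcon
  -- Every partition of I into countably many pieces has some F ∈ Φ meeting only
  -- finitely many pieces.
  have hne : (Φ ⊓ Filter.cofinite).NeBot := by
    rw [Filter.inf_neBot_iff]
    intro s hs t ht
    rw [Filter.mem_cofinite] at ht
    by_contra hemp
    rw [Set.not_nonempty_iff_eq_empty] at hemp
    have hsub : s ⊆ tᶜ := fun x hx hxt =>
      Set.eq_empty_iff_forall_notMem.mp hemp x ⟨hx, hxt⟩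
    exact (hinf s hs) (ht.subset hsub)
  obtain ⟨U, hU⟩ := Ultrafilter.exists_le (Φ ⊓ Filter.cofinite)
  have hUΦ : ∀ F ∈ Φ, F ∈ U := fun F hF => hU (Filter.mem_inf_of_left hF)
  have hUcof : ∀ s : Set I, sᶜ.Finite → s ∈ U := fun s hs =>
    hU (Filter.mem_inf_of_right (Filter.mem_cofinite.mpr hs))
  -- key: every function to ℕ has a fiber in U
  have key : ∀ f : I → ℕ, ∃ n, f ⁻¹' {n} ∈ U := by
    intro f
    obtain ⟨F, hF, hfin⟩ := hcon f
    have hsub : F ⊆ ⋃ n ∈ {n : ℕ | (F ∩ f ⁻¹' {n}).Nonempty}, f ⁻¹' {n} := by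
      intro x hx
      exact Set.mem_biUnion ⟨x, hx, rfl⟩ rfl
    have hmem : (⋃ n ∈ {n : ℕ | (F ∩ f ⁻¹' {n}).Nonempty}, f ⁻¹' {n}) ∈ U :=
      Filter.mem_of_superset (hUΦ F hF) hsub
    obtain ⟨n, _, hn⟩ := (Ultrafilter.finite_biUnion_mem_iff hfin).mp hmem
    exact ⟨n, hn⟩
  apply hnm
  refine ⟨U, fun a ha => ?_, fun g hg => ?_⟩
  · have h2 : ({a} : Set I)ᶜ ∈ U := hUcof _ (by simp)
    have := U.toFilter.inter_mem ha h2
    simp at this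
  · classical
    set A : Set I := ⋂ n, g n with hA
    set h : I → ℕ := fun i => if hi : i ∈ A then 0 else Nat.find (by simpa [hA, Set.mem_iInter] using hi) + 1 with hh
    obtain ⟨n, hn⟩ := key h
    match n with
    | 0 =>
      have hsub : h ⁻¹' {0} ⊆ A := by
        intro i hi
        by_contra hiA
        have : h i = 0 := hi
        simp [hh, hiA] at this
      exact Filter.mem_of_superset hn hsub
    | Nat.succ m =>
      exfalso
      have hgm : g m ∈ U := hg m
      have hdisj : h ⁻¹' {m + 1} ∩ g m = ∅ := by
        ext i
        simp only [Set.mem_inter_iff, Set.mem_preimage, Set.mem_singleton_iff, Set.mem_empty_iff_false, iff_false, not_and]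
        intro hi hig
        have hiA : i ∉ A := by
          intro hiA; simp [hh, hiA] at hi
        have : Nat.find (by simpa [hA, Set.mem_iInter] using hiA : ∃ n, i ∉ g n) = m := by
          simpa [hh, hiA] using hi
        exact (this ▸ Nat.find_spec (by simpa [hA, Set.mem_iInter] using hiA : ∃ n, i ∉ g n)) hig
      have := U.toFilter.inter_mem hn hgm
      rw [hdisj] at this
      exact U.neBot.ne (Filter.empty_mem_iff_bot.mp this)
end

section
/- Let I be an infinite set with |I| less than the first measurable cardinal, U a non-principal ultrafilter on I, and X_i = (X_i, ρ_i) nonempty binary structures. Then the ultraproduct ∏_U X_i is connected if and only if there is n ∈ ω such that {i ∈ I : every two points of X_i are joined by a path of length ≤ n+1} ∈ U. The backward implication holds in ZFC without restriction on |I|. -/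
section Helpers

lemma dLE_mono' {X : Type*} (ρ : X → X → Prop) {n m : ℕ} (h : n ≤ m) {x y : X} :
    dLE ρ n x y → dLE ρ m x y := fun ⟨k, hk, hz⟩ => ⟨k, hk.trans h, hz⟩

lemma pathPts_comp {X Y : Type*} (f : X → Y) {n : ℕ} (x y : X) (z : Fin n → X)
    (k : Fin (n + 2)) :
    pathPts (f x) (f y) (fun j => f (z j)) k = f (pathPts x y z k) := by
  unfold pathPts
  refine Fin.cases ?_ (fun j => ?_) k
  · simp
  · simp only [Fin.cons_succ]
    refine Fin.lastCases ?_ (fun j' => ?_) j <;> simp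

lemma pathPts_snoc {X : Type*} {m : ℕ} (x y : X) (z : Fin m → X) (k : Fin (m + 2)) :
    pathPts x y (Fin.snoc z y) k.castSucc = pathPts x y z k := by
  unfold pathPts
  refine Fin.cases ?_ (fun j => ?_) k
  · simp
  · rw [← Fin.succ_castSucc, Fin.cons_succ, Fin.cons_succ, Fin.snoc_castSucc]

lemma pathPts_last {X : Type*} {n : ℕ} (x y : X) (z : Fin n → X) :
    pathPts x y z (Fin.last (n + 1)) = y := by
  unfold pathPts
  rw [show Fin.last (n + 1) = (Fin.last n).succ from rfl, Fin.cons_succ, Fin.snoc_last]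

lemma IsPath.snocExt {X : Type*} {ρ : X → X → Prop} {m : ℕ} {z : Fin m → X}
    {ε : Fin (m + 1) → Bool} {x y : X} (h : IsPath ρ z ε x y) :
    IsPath ρ (Fin.snoc z y) (Fin.snoc ε false) x y := by
  intro k
  refine Fin.lastCases ?_ (fun k' => ?_) k
  · rw [Fin.snoc_last, pathPts_snoc, pathPts_last, Fin.succ_last, pathPts_last]
    simp [rStep, rRefl]
  · rw [Fin.snoc_castSucc, Fin.succ_castSucc, pathPts_snoc, pathPts_snoc]
    exact h k'

lemma exists_exact {X : Type*} (ρ : X → X → Prop) {n : ℕ} {x y : X} (h : dLE ρ n x y) :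
    ∃ z : Fin n → X, ∃ ε : Fin (n + 1) → Bool, IsPath ρ z ε x y := by
  obtain ⟨m, hm, z, ε, hp⟩ := h
  induction n, hm using Nat.le_induction with
  | base => exact ⟨z, ε, hp⟩
  | succ n hn ih =>
    obtain ⟨z', ε', hp'⟩ := ih
    exact ⟨Fin.snoc z' y, Fin.snoc ε' false, hp'.snocExt⟩

lemma exists_fiber_mem {I α : Type*} [Finite α] (U : Ultrafilter I) (f : I → α) :
    ∃ a, {i | f i = a} ∈ U := by
  have huniv : (⋃ a ∈ (Set.univ : Set α), {i | f i = a}) ∈ U := by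
    have : (⋃ a ∈ (Set.univ : Set α), {i | f i = a}) = Set.univ := by ext i; simp
    rw [this]; exact Filter.univ_mem
  rcases (Ultrafilter.finite_biUnion_mem_iff Set.finite_univ).mp huniv with ⟨a, _, ha⟩
  exact ⟨a, ha⟩

section transfer
variable {I : Type*} (U : Ultrafilter I) {X : I → Type*} (ρ : ∀ i, X i → X i → Prop)

lemma rRefl_red_iff {p q : ∀ i, X i} :
    rRefl (redRel (U : Filter I) ρ) (Quotient.mk _ p) (Quotient.mk _ q) ↔
      {i | rRefl (ρ i) (p i) (q i)} ∈ U := by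
  constructor
  · rintro (h | h)
    · exact Filter.mem_of_superset h fun i hi => Or.inl hi
    · have h' : {i | p i = q i} ∈ (U : Filter I) := Quotient.exact h
      exact Filter.mem_of_superset h' fun i hi => Or.inr hi
  · intro h
    have hu : ({i | ρ i (p i) (q i)} ∪ {i | p i = q i}) ∈ U :=
      Filter.mem_of_superset h fun i hi => hi
    rcases Ultrafilter.union_mem_iff.mp hu with h' | h'
    · exact Or.inl h'
    · exact Or.inr (Quotient.sound h')

lemma rStep_red_iff (e : Bool) {p q : ∀ i, X i} :
    rStep (redRel (U : Filter I) ρ) e (Quotient.mk _ p) (Quotient.mk _ q) ↔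
      {i | rStep (ρ i) e (p i) (q i)} ∈ U := by
  cases e
  · simpa [rStep] using rRefl_red_iff U ρ (p := p) (q := q)
  · simpa [rStep] using rRefl_red_iff U ρ (p := q) (q := p)

lemma isPath_red_of {n : ℕ} {Z : Fin n → ∀ i, X i} {ε : Fin (n + 1) → Bool}
    {x y : ∀ i, X i} {S : Set I} (hS : S ∈ U)
    (h : ∀ i ∈ S, IsPath (ρ i) (fun k => Z k i) ε (x i) (y i)) :
    IsPath (redRel (U : Filter I) ρ)
      (fun k => Quotient.mk (redSetoid (U : Filter I) X) (Z k)) ε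
      (Quotient.mk _ x) (Quotient.mk _ y) := by
  intro k
  rw [pathPts_comp (Quotient.mk (redSetoid (U : Filter I) X)) x y Z k.castSucc,
      pathPts_comp (Quotient.mk (redSetoid (U : Filter I) X)) x y Z k.succ,
      rStep_red_iff]
  refine Filter.mem_of_superset hS fun i hi => ?_
  have h1 := pathPts_comp (fun w : ∀ j, X j => w i) x y Z k.castSucc
  have h2 := pathPts_comp (fun w : ∀ j, X j => w i) x y Z k.succ
  have := h i hi k
  simpa only [h1, h2, Set.mem_setOf_eq] using this

lemma isPath_red_to {n : ℕ} {z : Fin n → Quotient (redSetoid (U : Filter I) X)}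
    {ε : Fin (n + 1) → Bool} {x y : ∀ i, X i}
    (h : IsPath (redRel (U : Filter I) ρ) z ε (Quotient.mk _ x) (Quotient.mk _ y)) :
    {i | IsPath (ρ i) (fun k => (z k).out i) ε (x i) (y i)} ∈ U := by
  set Z : Fin n → ∀ i, X i := fun k => (z k).out with hZ
  have hz : z = fun k => Quotient.mk (redSetoid (U : Filter I) X) (Z k) := by
    funext k; exact (Quotient.out_eq _).symm
  rw [hz] at h
  have hstep : ∀ k : Fin (n + 1),
      {i | rStep (ρ i) (ε k) (pathPts x y Z k.castSucc i) (pathPts x y Z k.succ i)} ∈ U := by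
    intro k
    have hk := h k
    rw [pathPts_comp (Quotient.mk (redSetoid (U : Filter I) X)) x y Z k.castSucc,
        pathPts_comp (Quotient.mk (redSetoid (U : Filter I) X)) x y Z k.succ,
        rStep_red_iff] at hk
    exact hk
  have hint : (⋂ k : Fin (n + 1),
      {i | rStep (ρ i) (ε k) (pathPts x y Z k.castSucc i) (pathPts x y Z k.succ i)}) ∈ U :=
    (Filter.iInter_mem).mpr hstep
  refine Filter.mem_of_superset hint fun i hi => ?_
  intro k
  have h1 := pathPts_comp (fun w : ∀ j, X j => w i) x y Z k.castSucc
  have h2 := pathPts_comp (fun w : ∀ j, X j => w i) x y Z k.succ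
  have := Set.mem_iInter.mp hi k
  simp only [Set.mem_setOf_eq, ← h1, ← h2] at this
  exact this

end transfer

lemma backward_conn {I : Type*} (U : Ultrafilter I) {X : I → Type*}
    [∀ i, Nonempty (X i)] (ρ : ∀ i, X i → X i → Prop)
    (h : ∃ n : ℕ, {i | ∀ a b : X i, dLE (ρ i) n a b} ∈ U) :
    Conn (redRel (U : Filter I) ρ) := by
  obtain ⟨n, hn⟩ := h
  intro xq yq
  obtain ⟨x, rfl⟩ := Quotient.exists_rep xq
  obtain ⟨y, rfl⟩ := Quotient.exists_rep yq
  have key : ∀ i, ∃ z : Fin n → X i, ∃ ε : Fin (n + 1) → Bool,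
      (∀ a b, dLE (ρ i) n a b) → IsPath (ρ i) z ε (x i) (y i) := by
    intro i
    by_cases h : ∀ a b, dLE (ρ i) n a b
    · obtain ⟨z, ε, hp⟩ := exists_exact _ (h (x i) (y i))
      exact ⟨z, ε, fun _ => hp⟩
    · exact ⟨fun _ => Classical.arbitrary _, fun _ => false, fun h' => absurd h' h⟩
  choose z ε hzε using key
  obtain ⟨E, hE⟩ := exists_fiber_mem U ε
  refine ⟨n, n, le_rfl, fun k => Quotient.mk _ (fun i => z i k), E, ?_⟩
  refine isPath_red_of U ρ (Z := fun k i => z i k)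
    (S := {i | ∀ a b, dLE (ρ i) n a b} ∩ {i | ε i = E}) (Filter.inter_mem hn hE) ?_
  rintro i ⟨h1, h2⟩
  have hp := hzε i h1
  rw [show E = ε i from h2.symm]
  exact hp

lemma exists_decreasing_empty {I : Type*} (U : Ultrafilter I) (hU : NonPrincipal U)
    (hNM : NoMeasurableLE I) :
    ∃ C : ℕ → Set I, (∀ n, C n ∈ U) ∧ (∀ n m, n ≤ m → C m ⊆ C n) ∧ (⋂ n, C n) = ∅ := by
  set e : ↥(Set.univ : Set I) ≃ I := Equiv.Set.univ I with he
  set U' : Ultrafilter ↥(Set.univ : Set I) := Ultrafilter.map e.symm U with hU'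
  have hnp : NonPrincipal U' := by
    intro a ha
    have hmem : e.symm ⁻¹' {a} ∈ U := ha
    have heq : e.symm ⁻¹' {a} = {(a : I)} := by
      ext i
      simp only [Set.mem_preimage, Set.mem_singleton_iff, Equiv.symm_apply_eq]
      exact Iff.rfl
    exact hU a.1 (heq ▸ hmem)
  have hnoc : ¬ OmegaComplete U' := fun hoc => hNM Set.univ U' ⟨hnp, hoc⟩
  rw [OmegaComplete] at hnoc
  push_neg at hnoc
  obtain ⟨f, hf, hfi⟩ := hnoc
  set g : ℕ → Set I := fun n => e.symm ⁻¹' (f n) with hg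
  have hgmem : ∀ n, g n ∈ U := fun n => hf n
  have hgi : (⋂ n, g n) ∉ U := by
    intro h
    apply hfi
    show e.symm ⁻¹' (⋂ n, f n) ∈ U
    rwa [Set.preimage_iInter]
  refine ⟨fun n => (⋂ k ∈ Finset.range (n + 1), g k) ∩ (⋂ k, g k)ᶜ, fun n => ?_, ?_, ?_⟩
  · refine Filter.inter_mem ?_ ((Ultrafilter.compl_mem_iff_notMem).mpr hgi)
    exact (Filter.biInter_finset_mem _).mpr fun k _ => hgmem k
  · intro n m hnm i hi
    refine ⟨?_, hi.2⟩
    have := hi.1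
    simp only [Set.mem_iInter] at this ⊢
    intro k hk
    exact this k (Finset.mem_range.mpr (lt_of_lt_of_le (Finset.mem_range.mp hk) (by omega)))
  · rw [Set.eq_empty_iff_forall_notMem]
    intro i hi
    have h0 := Set.mem_iInter.mp hi 0
    apply h0.2
    refine Set.mem_iInter.mpr fun k => ?_
    have hk := (Set.mem_iInter.mp hi k).1
    simp only [Set.mem_iInter] at hk
    exact hk k (Finset.mem_range.mpr (by omega))

end Helpers

theorem stmt_8 {I : Type*} [Infinite I] (U : Ultrafilter I) (hU : NonPrincipal U)
    {X : I → Type*} [∀ i, Nonempty (X i)] (ρ : ∀ i, X i → X i → Prop) :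
    (NoMeasurableLE I →
      (Conn (redRel (U : Filter I) ρ) ↔
        ∃ n : ℕ, {i | ∀ a b : X i, dLE (ρ i) n a b} ∈ U)) ∧
    ((∃ n : ℕ, {i | ∀ a b : X i, dLE (ρ i) n a b} ∈ U) →
      Conn (redRel (U : Filter I) ρ)) := by
  classical
  have hback : (∃ n : ℕ, {i | ∀ a b : X i, dLE (ρ i) n a b} ∈ U) →
      Conn (redRel (U : Filter I) ρ) := backward_conn U ρ
  refine ⟨fun hNM => ⟨?_, hback⟩, hback⟩
  intro hconn
  by_contra hno
  push_neg at hno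
  obtain ⟨C, hCmem, hCanti, hCempty⟩ := exists_decreasing_empty U hU hNM
  set A : ℕ → Set I := fun n => {i | ∀ a b : X i, dLE (ρ i) n a b}ᶜ with hA
  have hAmem : ∀ n, A n ∈ U := fun n =>
    (Ultrafilter.compl_mem_iff_notMem).mpr (hno n)
  have hAanti : ∀ n m, n ≤ m → A m ⊆ A n := by
    intro n m hnm i hi hcon
    exact hi fun a b => dLE_mono' _ hnm (hcon a b)
  set D : ℕ → Set I := fun n => A n ∩ C n with hD
  have hDmem : ∀ n, D n ∈ U := fun n => Filter.inter_mem (hAmem n) (hCmem n)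
  have hDanti : ∀ n m, n ≤ m → D m ⊆ D n := fun n m hnm i hi =>
    ⟨hAanti n m hnm hi.1, hCanti n m hnm hi.2⟩
  have hex : ∀ i, ∃ n, i ∉ D n := by
    intro i
    by_contra hc
    push_neg at hc
    have : i ∈ ⋂ n, C n := Set.mem_iInter.mpr fun n => (hc n).2
    rw [hCempty] at this
    exact this
  set μ : I → ℕ := fun i => Nat.find (hex i) with hμ
  have hmemlt : ∀ i n, i ∈ D n → n < μ i := by
    intro i n hin
    by_contra hc
    push_neg at hc
    exact Nat.find_spec (hex i) (hDanti (μ i) n hc hin)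
  have key : ∀ i, ∃ p : X i × X i, ∀ n, i ∈ D n → ¬ dLE (ρ i) n p.1 p.2 := by
    intro i
    by_cases hpos : 0 < μ i
    · have hmem : i ∈ D (μ i - 1) := by
        have h1 : μ i - 1 < Nat.find (hex i) := by
          have h2 : Nat.find (hex i) = μ i := rfl
          omega
        exact not_not.mp (Nat.find_min (hex i) h1)
      have hAm : i ∈ A (μ i - 1) := hmem.1
      rw [hA, Set.mem_compl_iff, Set.mem_setOf_eq] at hAm
      push_neg at hAm
      obtain ⟨a, b, hab⟩ := hAm
      refine ⟨(a, b), fun n hin hd => ?_⟩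
      have hlt := hmemlt i n hin
      exact hab (dLE_mono' _ (by omega) hd)
    · refine ⟨(Classical.arbitrary _, Classical.arbitrary _), fun n hin => ?_⟩
      exact absurd (hmemlt i n hin) (by omega)
  choose p hp using key
  set x : ∀ i, X i := fun i => (p i).1 with hx
  set y : ∀ i, X i := fun i => (p i).2 with hy
  obtain ⟨N, hdN⟩ := hconn (Quotient.mk _ x) (Quotient.mk _ y)
  obtain ⟨m, hmN, zq, ε, hpath⟩ := hdN
  have hT := isPath_red_to U ρ hpath
  have hTD : ({i | IsPath (ρ i) (fun k => (zq k).out i) ε (x i) (y i)} ∩ D m) ∈ U :=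
    Filter.inter_mem hT (hDmem m)
  obtain ⟨i, hi1, hi2⟩ := Ultrafilter.nonempty_of_mem hTD
  exact hp i m hi2 ⟨m, le_rfl, fun k => (zq k).out i, ε, hi1⟩
end

section
/- Let U be a non-principal ω-complete ultrafilter on a set I and X_i = (X_i, ρ_i) binary structures with {i : X_i is connected} ∈ U. Then for any x, y ∈ ∏ X_i there exist n ∈ ω, a sign pattern ε ∈ 2^{n+1}, and a set A ∈ U such that for every i ∈ A there is a path (z̄, ε) of length n+1 from x_i to y_i in X_i with this same pattern ε; consequently [x]_U and [y]_U are connected by a path in ∏_U X_i. -/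
lemma pathPts_succ_cons {X : Type*} {n : ℕ} (x y : X) (z : Fin n → X) (j : Fin (n + 2)) :
    pathPts x y (Fin.cons x z) j.succ = pathPts x y z j := by
  unfold pathPts
  rw [Fin.cons_succ]
  induction j using Fin.lastCases with
  | last => rw [Fin.snoc_last, ← Fin.succ_last, Fin.cons_succ, Fin.snoc_last]
  | cast j =>
    rw [Fin.snoc_castSucc]
    induction j using Fin.cases with
    | zero => simp
    | succ j' => simp [← Fin.succ_castSucc]

lemma IsPath.extend {X : Type*} {ρ : X → X → Prop} {n : ℕ} {z : Fin n → X}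
    {ε : Fin (n + 1) → Bool} {x y : X} (h : IsPath ρ z ε x y) :
    IsPath ρ (Fin.cons x z) (Fin.cons false ε) x y := by
  intro k
  induction k using Fin.cases with
  | zero =>
    have h1 : pathPts x y (Fin.cons x z) (0 : Fin (n + 2)).castSucc = x := rfl
    have h2 : pathPts x y (Fin.cons x z) (0 : Fin (n + 2)).succ = x := by
      have : (0 : Fin (n + 2)).succ = (0 : Fin (n + 1)).castSucc.succ := rfl
      rw [this]
      have := pathPts_succ_cons x y z (0 : Fin (n + 1)).castSucc
      simpa [pathPts] using this
    rw [Fin.cons_zero, h1, h2]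
    exact Or.inr rfl
  | succ j =>
    rw [Fin.cons_succ]
    have h1 : (j.succ).castSucc = (j.castSucc).succ := (Fin.succ_castSucc j).symm
    rw [h1, pathPts_succ_cons, pathPts_succ_cons]
    exact h j

lemma dLE_exact {X : Type*} {ρ : X → X → Prop} {n : ℕ} {x y : X} (h : dLE ρ n x y) :
    ∃ z : Fin n → X, ∃ ε : Fin (n + 1) → Bool, IsPath ρ z ε x y := by
  obtain ⟨m, hm, z, ε, hp⟩ := h
  obtain ⟨d, rfl⟩ := Nat.le.dest hm
  induction d with
  | zero => exact ⟨z, ε, hp⟩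
  | succ d ih =>
    obtain ⟨z', ε', hp'⟩ := ih (Nat.le_add_right m d)
    exact ⟨Fin.cons x z', Fin.cons false ε', hp'.extend⟩

lemma pathPts_mk {I : Type*} (Φ : Filter I) {X : I → Type*} {n : ℕ}
    (x y : ∀ i, X i) (g : Fin n → ∀ i, X i) (j : Fin (n + 2)) :
    pathPts (Quotient.mk (redSetoid Φ X) x) (Quotient.mk (redSetoid Φ X) y)
      (fun k => Quotient.mk (redSetoid Φ X) (g k)) j
      = Quotient.mk (redSetoid Φ X) (fun i => pathPts (x i) (y i) (fun k => g k i) j) := by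
  unfold pathPts
  induction j using Fin.cases with
  | zero => simp
  | succ j =>
    simp only [Fin.cons_succ]
    induction j using Fin.lastCases with
    | last => simp
    | cast j => simp

lemma rStep_false {X : Type*} (ρ : X → X → Prop) (a b : X) :
    rStep ρ false a b = rRefl ρ a b := rfl

lemma rStep_true {X : Type*} (ρ : X → X → Prop) (a b : X) :
    rStep ρ true a b = rRefl ρ b a := rfl

lemma rRefl_red {I : Type*} (U : Ultrafilter I) {X : I → Type*}
    (ρ : ∀ i, X i → X i → Prop) (a b : ∀ i, X i)
    (h : {i | rRefl (ρ i) (a i) (b i)} ∈ U) :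
    rRefl (redRel (U : Filter I) ρ)
      (Quotient.mk (redSetoid (U : Filter I) X) a)
      (Quotient.mk (redSetoid (U : Filter I) X) b) := by
  have h' : {i | ρ i (a i) (b i)} ∪ {i | a i = b i} ∈ U := h
  rcases Ultrafilter.union_mem_iff.1 h' with h'' | h''
  · exact Or.inl h''
  · exact Or.inr (Quotient.sound h'')

theorem stmt_11 {I : Type*} (U : Ultrafilter I) (hU : NonPrincipal U)
    (hω : OmegaComplete U) {X : I → Type*} (ρ : ∀ i, X i → X i → Prop)
    (hc : {i | Conn (ρ i)} ∈ U) (x y : ∀ i, X i) :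
    ∃ (n : ℕ) (ε : Fin (n + 1) → Bool) (A : Set I), A ∈ U ∧
      (∀ i ∈ A, ∃ z : Fin n → X i, IsPath (ρ i) z ε (x i) (y i)) ∧
      ∃ Z : Fin n → Quotient (redSetoid (U : Filter I) X),
        IsPath (redRel (U : Filter I) ρ) Z ε
          (Quotient.mk (redSetoid (U : Filter I) X) x)
          (Quotient.mk (redSetoid (U : Filter I) X) y) := by
  -- Step 1: some exact length `n` works on a set in `U`.
  have h1 : ∃ n, {i | ∃ z : Fin n → X i, ∃ ε : Fin (n + 1) → Bool,
      IsPath (ρ i) z ε (x i) (y i)} ∈ U := by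
    by_contra h
    push_neg at h
    have hcompl : ∀ n, {i | ∃ z : Fin n → X i, ∃ ε : Fin (n + 1) → Bool,
        IsPath (ρ i) z ε (x i) (y i)}ᶜ ∈ U :=
      fun n => Ultrafilter.compl_mem_iff_notMem.2 (h n)
    have hint := hω _ hcompl
    obtain ⟨i, hi1, hi2⟩ := Filter.nonempty_of_mem (Filter.inter_mem hint hc)
    obtain ⟨n, hn⟩ := hi2 (x i) (y i)
    obtain ⟨z, ε, hp⟩ := dLE_exact hn
    exact (Set.mem_iInter.1 hi1 n) ⟨z, ε, hp⟩
  obtain ⟨n, hn⟩ := h1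
  -- Step 2: one fixed sign pattern `ε` works on a set in `U`.
  have h2 : ∃ ε : Fin (n + 1) → Bool,
      {i | ∃ z : Fin n → X i, IsPath (ρ i) z ε (x i) (y i)} ∈ U := by
    by_contra h
    push_neg at h
    have hcompl : ∀ ε : Fin (n + 1) → Bool,
        {i | ∃ z : Fin n → X i, IsPath (ρ i) z ε (x i) (y i)}ᶜ ∈ U :=
      fun ε => Ultrafilter.compl_mem_iff_notMem.2 (h ε)
    have hint : (⋂ ε : Fin (n + 1) → Bool,
        {i | ∃ z : Fin n → X i, IsPath (ρ i) z ε (x i) (y i)}ᶜ) ∈ U :=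
      (Filter.iInter_mem).2 hcompl
    obtain ⟨i, hi1, hi2⟩ := Filter.nonempty_of_mem (Filter.inter_mem hint hn)
    obtain ⟨z, ε, hp⟩ := hi2
    exact (Set.mem_iInter.1 hi1 ε) ⟨z, hp⟩
  obtain ⟨ε, hA⟩ := h2
  set A : Set I := {i | ∃ z : Fin n → X i, IsPath (ρ i) z ε (x i) (y i)} with hAdef
  refine ⟨n, ε, A, hA, fun i hi => hi, ?_⟩
  -- Choose witnesses on `A`.
  have hz : ∀ i, ∃ z : Fin n → X i, i ∈ A → IsPath (ρ i) z ε (x i) (y i) := by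
    intro i
    by_cases h : i ∈ A
    · exact ⟨h.choose, fun _ => h.choose_spec⟩
    · exact ⟨fun _ => x i, fun h' => absurd h' h⟩
  choose w hw using hz
  set g : Fin n → ∀ i, X i := fun k i => w i k with hg
  refine ⟨fun k => Quotient.mk (redSetoid (U : Filter I) X) (g k), ?_⟩
  intro k
  have key : ∀ i ∈ A, rStep (ρ i) (ε k)
      (pathPts (x i) (y i) (fun k' => g k' i) k.castSucc)
      (pathPts (x i) (y i) (fun k' => g k' i) k.succ) := fun i hi => hw i hi k
  have hcs := pathPts_mk (U : Filter I) x y g k.castSucc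
  have hs := pathPts_mk (U : Filter I) x y g k.succ
  rcases Bool.eq_false_or_eq_true (ε k) with hb | hb <;> rw [hb]
  · rw [rStep_true, hcs, hs]
    apply rRefl_red
    apply Filter.mem_of_superset hA
    intro i hi
    have h := key i hi
    rw [hb, rStep_true] at h
    exact h
  · rw [rStep_false, hcs, hs]
    apply rRefl_red
    apply Filter.mem_of_superset hA
    intro i hi
    have h := key i hi
    rw [hb, rStep_false] at h
    exact h
end

section
/- Let I be an infinite set with |I| less than the first measurable cardinal and U a non-principal ultrafilter on I. Then the ultrapower ∏_U G_ω of the linear graph G_ω = (ω, {(m,n) : |m−n| = 1}) is a disconnected graph. -/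
section Aux

variable {I : Type*}

lemma redRel_mk (Φ : Filter I) {X : I → Type*} (ρ : ∀ i, X i → X i → Prop)
    (u v : ∀ i, X i) :
    redRel Φ ρ (Quotient.mk _ u) (Quotient.mk _ v) ↔ {i | ρ i (u i) (v i)} ∈ Φ :=
  Iff.rfl

lemma rRefl_dist_mem (U : Ultrafilter I)
    (a b : Quotient (redSetoid (U : Filter I) (fun _ : I => ℕ)))
    (h : rRefl (redRel (U : Filter I) (fun _ : I => linRel)) a b) :
    {i | Nat.dist (a.out i) (b.out i) ≤ 1} ∈ U := by
  rcases h with h | rfl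
  · rw [← a.out_eq, ← b.out_eq] at h
    rw [redRel_mk] at h
    filter_upwards [h] with i hi
    exact le_of_eq hi
  · filter_upwards with i
    simp [Nat.dist_self]

lemma step_dist_mem (U : Ultrafilter I) (e : Bool)
    (a b : Quotient (redSetoid (U : Filter I) (fun _ : I => ℕ)))
    (h : rStep (redRel (U : Filter I) (fun _ : I => linRel)) e a b) :
    {i | Nat.dist (a.out i) (b.out i) ≤ 1} ∈ U := by
  unfold rStep at h
  rcases e with _ | _
  · simpa using rRefl_dist_mem U a b (by simpa using h)
  · have := rRefl_dist_mem U b a (by simpa using h)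
    filter_upwards [this] with i hi
    rwa [Nat.dist_comm]

end Aux

theorem stmt_13 {I : Type*} [Infinite I] (hI : NoMeasurableLE I)
    (U : Ultrafilter I) (hU : NonPrincipal U) :
    ¬ Conn (redRel (U : Filter I) (fun _ : I => linRel)) := by
  classical
  intro hconn
  -- U is not ω-complete
  have hnoc : ¬ OmegaComplete U := by
    intro hoc
    refine hI Set.univ
      (Ultrafilter.map (fun i => (⟨i, trivial⟩ : (Set.univ : Set I))) U) ⟨?_, ?_⟩
    · intro a
      simp only [Ultrafilter.mem_map]
      have he : (fun i => (⟨i, trivial⟩ : (Set.univ : Set I))) ⁻¹' {a} = {a.1} := by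
        ext i
        simp [Subtype.ext_iff, eq_comm]
      rw [he]
      exact hU a.1
    · intro f hf
      simp only [Ultrafilter.mem_map] at hf ⊢
      have := hoc _ hf
      simpa [Set.preimage_iInter] using this
  unfold OmegaComplete at hnoc
  push_neg at hnoc
  obtain ⟨f, hf, hfi⟩ := hnoc
  -- decreasing sequence
  set F : ℕ → Set I := fun n => ⋂ k ≤ n, f k with hF
  have hFU : ∀ n, F n ∈ U := by
    intro n
    exact (Filter.biInter_mem (Set.finite_Iic n)).2 fun k _ => hf k
  have hFanti : ∀ m n : ℕ, m ≤ n → F n ⊆ F m := by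
    intro m n hmn i hi
    simp only [hF, Set.mem_iInter] at hi ⊢
    exact fun k hk => hi k (hk.trans hmn)
  have hFf : ∀ n, F n ⊆ f n := by
    intro n i hi
    simp only [hF, Set.mem_iInter] at hi
    exact hi n le_rfl
  have hcompl : (⋂ n, f n)ᶜ ∈ U := Ultrafilter.compl_mem_iff_notMem.2 hfi
  -- the unbounded element
  set g : I → ℕ := fun i => if h : ∃ n, i ∉ F n then Nat.find h else 0 with hg
  have hgU : ∀ N : ℕ, {i | N ≤ g i} ∈ U := by
    intro N
    have hsub : F N ∩ (⋂ n, f n)ᶜ ⊆ {i | N ≤ g i} := by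
      rintro i ⟨hiF, hic⟩
      have hex : ∃ n, i ∉ F n := by
        simp only [Set.mem_compl_iff, Set.mem_iInter, not_forall] at hic
        obtain ⟨n, hn⟩ := hic
        exact ⟨n, fun h => hn (hFf n h)⟩
      have hgi : g i = Nat.find hex := dif_pos hex
      simp only [Set.mem_setOf_eq, hgi]
      rw [Nat.le_find_iff]
      intro m hm hmF
      exact hmF (hFanti m N hm.le hiF)
    exact Filter.mem_of_superset (Filter.inter_mem (hFU N) hcompl) hsub
  -- use connectivity between 0 and g
  obtain ⟨n, m, hmn, z, ε, hpath⟩ :=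
    hconn (Quotient.mk _ (fun _ => 0)) (Quotient.mk _ g)
  set p : Fin (m + 2) → Quotient (redSetoid (U : Filter I) (fun _ : I => ℕ)) :=
    pathPts (Quotient.mk _ (fun _ => 0)) (Quotient.mk _ g) z with hp
  set q : Fin (m + 2) → I → ℕ := fun k => (p k).out with hq
  have hstep : ∀ k : Fin (m + 1),
      {i | Nat.dist (q k.castSucc i) (q k.succ i) ≤ 1} ∈ U := by
    intro k
    exact step_dist_mem U (ε k) _ _ (hpath k)
  have hT : (⋂ k : Fin (m + 1),
      {i | Nat.dist (q k.castSucc i) (q k.succ i) ≤ 1}) ∈ U :=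
    Filter.iInter_mem.2 hstep
  -- endpoints
  have hp0 : p 0 = Quotient.mk _ (fun _ => 0) := by
    simp [hp, pathPts]
  have hpl : p (Fin.last (m + 1)) = Quotient.mk _ g := by
    rw [hp, pathPts, ← Fin.succ_last, Fin.cons_succ, Fin.snoc_last]
  have hA : {i | q 0 i = 0} ∈ U := by
    have := Quotient.exact ((p 0).out_eq.trans hp0)
    exact this
  have hB : {i | q (Fin.last (m + 1)) i = g i} ∈ U := by
    have := Quotient.exact ((p (Fin.last (m + 1))).out_eq.trans hpl)
    exact this
  -- pick a point
  obtain ⟨i, hiT, hiA, hiB, hiG⟩ := Filter.nonempty_of_mem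
    (Filter.inter_mem hT (Filter.inter_mem hA (Filter.inter_mem hB (hgU (m + 2)))))
  simp only [Set.mem_inter_iff, Set.mem_iInter, Set.mem_setOf_eq] at hiT hiA hiB hiG
  -- chain inequality
  have hchain : ∀ j : ℕ, (hj : j < m + 2) → Nat.dist (q 0 i) (q ⟨j, hj⟩ i) ≤ j := by
    intro j
    induction j with
    | zero => intro hj; simp [Nat.dist_self]
    | succ j ih =>
      intro hj
      have hj' : j < m + 2 := Nat.lt_of_succ_lt hj
      have hk : j < m + 1 := Nat.lt_of_succ_lt_succ hj
      have hstepj := hiT ⟨j, hk⟩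
      have hcs : (⟨j, hk⟩ : Fin (m + 1)).castSucc = ⟨j, hj'⟩ := rfl
      have hsucc : (⟨j, hk⟩ : Fin (m + 1)).succ = ⟨j + 1, hj⟩ := rfl
      rw [hcs, hsucc] at hstepj
      calc Nat.dist (q 0 i) (q ⟨j + 1, hj⟩ i)
          ≤ Nat.dist (q 0 i) (q ⟨j, hj'⟩ i) + Nat.dist (q ⟨j, hj'⟩ i) (q ⟨j + 1, hj⟩ i) :=
            Nat.dist.triangle_inequality _ _ _
        _ ≤ j + 1 := Nat.add_le_add (ih hj') hstepj
  have hlast : Nat.dist (q 0 i) (q (Fin.last (m + 1)) i) ≤ m + 1 := by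
    have := hchain (m + 1) (by omega)
    simpa [Fin.last] using this
  rw [hiA, hiB] at hlast
  have : g i ≤ m + 1 := by simpa [Nat.dist] using hlast
  omega
end
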